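/- Let k ≥ 1 be an integer and let S be a conical product rule of order k on the reference pyramid (built from two one-dimensional quadratures exact for polynomials of degree ≤ 2k+1 as in the stated hypotheses, with all points ζ_l ∈ [0,1)). Let ũ, ṽ be elements of the L²-underlying space U^{(3)}_k = Q_{k+3}^{k−1,k−1,k−1} (functions on K∞), and define û, v̂ on K̂ ∖ {ζ=1} by û(ξ,η,ζ) = (1−ζ)^{−4} · ũ(φ⁻¹(ξ,η,ζ)) and likewise for v̂, where φ⁻¹(ξ,η,ζ) = (ξ/(1−ζ), η/(1−ζ), ζ/(1−ζ)). Then û·v̂ is Lebesgue integrable on K̂ and S(û·v̂) = ∫_{K̂} û·v̂. -/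

import Mathlib

open MeasureTheory

noncomputable section

/-- The reference pyramid K̂ ⊂ ℝ³ (coordinates (ξ, η, ζ)). -/
def Khat : Set (ℝ × ℝ × ℝ) :=
  {p | 0 ≤ p.2.2 ∧ p.2.2 ≤ 1 ∧ 0 ≤ p.1 ∧ p.1 ≤ 1 - p.2.2 ∧ 0 ≤ p.2.1 ∧ p.2.1 ≤ 1 - p.2.2}

/-- The k-weighted tensor product polynomial space Q_k^{l,m,n}: the span of
(x,y,z) ↦ x^a y^b z^c / (1+z)^k for 0 ≤ a ≤ l, 0 ≤ b ≤ m, 0 ≤ c ≤ n. -/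
def Qspace (k : ℕ) (l m n : ℤ) : Submodule ℝ ((ℝ × ℝ × ℝ) → ℝ) :=
  Submodule.span ℝ {f | ∃ a b c : ℕ, (a : ℤ) ≤ l ∧ (b : ℤ) ≤ m ∧ (c : ℤ) ≤ n ∧
    f = fun p => p.1 ^ a * p.2.1 ^ b * p.2.2 ^ c / (1 + p.2.2) ^ k}

/-- The inverse of the projective map φ: (ξ,η,ζ) ↦ (ξ/(1−ζ), η/(1−ζ), ζ/(1−ζ)). -/
def phiInv (p : ℝ × ℝ × ℝ) : ℝ × ℝ × ℝ :=
  (p.1 / (1 - p.2.2), p.2.1 / (1 - p.2.2), p.2.2 / (1 - p.2.2))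

/-- The conical product quadrature rule on the reference pyramid. -/
def quadS {N M : ℕ} (xi lam : Fin N → ℝ) (ze mu : Fin M → ℝ) (f : ℝ × ℝ × ℝ → ℝ) : ℝ :=
  ∑ i, ∑ j, ∑ l, lam i * lam j * mu l * f (xi i * (1 - ze l), xi j * (1 - ze l), ze l)

/-! ### Auxiliary lemmas -/

private lemma m1' : Measurable (fun p : ℝ×ℝ×ℝ => p.1) := measurable_fst
private lemma m2' : Measurable (fun p : ℝ×ℝ×ℝ => p.2.1) := measurable_snd.fst
private lemma m3' : Measurable (fun p : ℝ×ℝ×ℝ => p.2.2) := measurable_snd.snd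

private lemma Khat_mble : MeasurableSet Khat := by
  unfold Khat
  simp only [Set.setOf_and]
  exact (measurableSet_le measurable_const m3').inter
    ((measurableSet_le m3' measurable_const).inter
    ((measurableSet_le measurable_const m1').inter
    ((measurableSet_le m1' (measurable_const.sub m3')).inter
    ((measurableSet_le measurable_const m2').inter
    (measurableSet_le m2' (measurable_const.sub m3'))))))

private lemma sing_null : volume ({((0:ℝ),(0:ℝ),(1:ℝ))} : Set (ℝ×ℝ×ℝ)) = 0 := by
  rw [show ({((0:ℝ),(0:ℝ),(1:ℝ))} : Set (ℝ×ℝ×ℝ)) = {(0:ℝ)} ×ˢ ({(0:ℝ)} ×ˢ {(1:ℝ)}) by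
    simp [Set.singleton_prod_singleton]]
  rw [Measure.volume_eq_prod, Measure.prod_prod, Measure.volume_eq_prod, Measure.prod_prod,
    Real.volume_singleton]
  simp

private lemma Khat_vol : volume Khat ≠ ⊤ := by
  have hsub : Khat ⊆ Set.Icc ((0:ℝ),(0:ℝ),(0:ℝ)) (1,1,1) := by
    rintro ⟨x,y,z⟩ ⟨h1,h2,h3,h4,h5,h6⟩
    simp only [Set.mem_Icc, Prod.le_def] at *
    exact ⟨⟨h3, h5, h1⟩, ⟨by linarith, by linarith, h2⟩⟩
  exact ((measure_mono hsub).trans_lt (isCompact_Icc.measure_lt_top)).ne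

private lemma core_int (k A B C : ℕ) (hC : C + 2 ≤ 2*k) :
    IntegrableOn (fun p : ℝ×ℝ×ℝ =>
      p.1^A * p.2.1^B * p.2.2^C * (1-p.2.2)^(2*k+6) / (1-p.2.2)^(8+A+B+C)) Khat volume := by
  apply Measure.integrableOn_of_bounded (M := 1) Khat_vol
  · apply Measurable.aestronglyMeasurable
    apply Measurable.div
    · exact ((((measurable_fst.pow_const A).mul ((measurable_snd.fst).pow_const B)).mul
        ((measurable_snd.snd).pow_const C)).mul
        ((measurable_const.sub measurable_snd.snd).pow_const _))
    · exact (measurable_const.sub measurable_snd.snd).pow_const _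
  · rw [Filter.eventually_iff_exists_mem]
    refine ⟨Khat, self_mem_ae_restrict Khat_mble, ?_⟩
    rintro ⟨x,y,z⟩ ⟨h1,h2,h3,h4,h5,h6⟩
    simp only
    by_cases hz : z = 1
    · simp [hz, sub_self, zero_pow (by omega : 2*k+6 ≠ 0)]
    · have htpos : (0:ℝ) < 1 - z := by
        rcases lt_or_eq_of_le h2 with h | h
        · linarith
        · exact absurd h hz
      have hnn : (0:ℝ) ≤ x^A * y^B * z^C * (1-z)^(2*k+6) / (1-z)^(8+A+B+C) := by positivity
      rw [Real.norm_eq_abs, abs_of_nonneg hnn, div_le_one (by positivity)]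
      calc x^A * y^B * z^C * (1-z)^(2*k+6)
          ≤ (1-z)^A * (1-z)^B * 1 * (1-z)^(2*k+6) := by
            have ht : (0:ℝ) ≤ 1 - z := le_trans h3 h4
            refine mul_le_mul_of_nonneg_right ?_ (pow_nonneg ht _)
            refine mul_le_mul (mul_le_mul (pow_le_pow_left₀ h3 h4 A) (pow_le_pow_left₀ h5 h6 B)
              (pow_nonneg h5 B) (pow_nonneg ht A)) (pow_le_one₀ h1 h2) (pow_nonneg h1 C) ?_
            exact mul_nonneg (pow_nonneg ht A) (pow_nonneg ht B)
        _ = (1-z)^(A+B+(2*k+6)) := by ring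
        _ ≤ (1-z)^(8+A+B+C) := pow_le_pow_of_le_one htpos.le (by linarith) (by omega)

private def gg1 (k A B C : ℕ) (q : ℝ×ℝ) : ℝ :=
  if 0 ≤ q.2 ∧ q.2 ≤ 1 ∧ 0 ≤ q.1 ∧ q.1 ≤ 1 - q.2
    then q.1^B * q.2^C * (1-q.2)^(2*k+6)/(1-q.2)^(8+A+B+C) * ((1-q.2)^(A+1)/(A+1)) else 0

private def gg2 (k A B C : ℕ) (z : ℝ) : ℝ :=
  if 0 ≤ z ∧ z ≤ 1
    then z^C * (1-z)^(2*k+6)/(1-z)^(8+A+B+C) * ((1-z)^(A+1)/(A+1)) * ((1-z)^(B+1)/(B+1))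
    else 0

private lemma core_eq (k A B C : ℕ) (hC : C + 2 ≤ 2*k) :
    ∫ p in Khat, (p.1^A * p.2.1^B * p.2.2^C * (1-p.2.2)^(2*k+6) / (1-p.2.2)^(8+A+B+C))
      = (∫ x in (0:ℝ)..1, x^A) * (∫ x in (0:ℝ)..1, x^B)
        * ∫ z in (0:ℝ)..1, (1-z)^2 * (z^C * (1-z)^(2*k-2-C)) := by
  have hint := core_int k A B C hC
  set G : ℝ×ℝ×ℝ → ℝ := fun p =>
    p.1^A * p.2.1^B * p.2.2^C * (1-p.2.2)^(2*k+6) / (1-p.2.2)^(8+A+B+C) with hGdef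
  have hf : Integrable (Khat.indicator G) volume :=
    (integrable_indicator_iff Khat_mble).2 hint
  have step1 : ∀ q : ℝ×ℝ, (∫ ξ, Khat.indicator G (ξ, q)) = gg1 k A B C q := by
    intro q
    by_cases hq : 0 ≤ q.2 ∧ q.2 ≤ 1 ∧ 0 ≤ q.1 ∧ q.1 ≤ 1 - q.2
    · obtain ⟨hq1, hq2, hq3, hq4⟩ := hq
      have hptw : ∀ ξ : ℝ, Khat.indicator G (ξ, q)
          = (Set.Icc (0:ℝ) (1-q.2)).indicator (fun x => x^A) ξ
            * (q.1^B * q.2^C * (1-q.2)^(2*k+6)/(1-q.2)^(8+A+B+C)) := by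
        intro ξ
        by_cases hξ : ξ ∈ Set.Icc (0:ℝ) (1-q.2)
        · rw [Set.indicator_of_mem hξ, Set.indicator_of_mem
            (show (ξ, q) ∈ Khat from ⟨hq1, hq2, hξ.1, hξ.2, hq3, hq4⟩)]
          show G (ξ, q) = _
          rw [hGdef]; ring
        · rw [Set.indicator_of_notMem hξ, Set.indicator_of_notMem, zero_mul]
          rw [Set.mem_Icc] at hξ
          intro hmem
          exact hξ ⟨hmem.2.2.1, hmem.2.2.2.1⟩
      simp_rw [hptw]
      rw [integral_mul_const, integral_indicator measurableSet_Icc,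
        integral_Icc_eq_integral_Ioc,
        ← intervalIntegral.integral_of_le (by linarith : (0:ℝ) ≤ 1 - q.2),
        integral_pow]
      simp only [gg1, if_pos (show 0 ≤ q.2 ∧ q.2 ≤ 1 ∧ 0 ≤ q.1 ∧ q.1 ≤ 1 - q.2 from
        ⟨hq1, hq2, hq3, hq4⟩)]
      rw [zero_pow (show A+1 ≠ 0 by omega)]
      ring
    · have hptw : ∀ ξ : ℝ, Khat.indicator G (ξ, q) = 0 := by
        intro ξ
        apply Set.indicator_of_notMem
        intro hmem
        exact hq ⟨hmem.1, hmem.2.1, hmem.2.2.2.2.1, hmem.2.2.2.2.2⟩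
      simp_rw [hptw]
      rw [integral_zero]
      exact (if_neg hq).symm
  have hprod : (volume : Measure (ℝ × (ℝ×ℝ))) = (volume : Measure ℝ).prod volume :=
    Measure.volume_eq_prod _ _
  have hfprod : Integrable (Khat.indicator G) ((volume : Measure ℝ).prod volume) := by
    rwa [← hprod]
  have hg1int : Integrable (gg1 k A B C) (volume : Measure (ℝ×ℝ)) := by
    have h2 := hfprod.integral_prod_right
    rwa [funext step1] at h2
  have step2 : ∫ p in Khat, G p = ∫ q, gg1 k A B C q := by
    rw [← integral_indicator Khat_mble, hprod, integral_prod_symm _ hfprod]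
    simp_rw [step1]
  have step3 : ∀ z : ℝ, (∫ η, gg1 k A B C (η, z)) = gg2 k A B C z := by
    intro z
    by_cases hz : 0 ≤ z ∧ z ≤ 1
    · obtain ⟨hz1, hz2⟩ := hz
      have hptw : ∀ η : ℝ, gg1 k A B C (η, z)
          = (Set.Icc (0:ℝ) (1-z)).indicator (fun y => y^B) η
            * (z^C * (1-z)^(2*k+6)/(1-z)^(8+A+B+C) * ((1-z)^(A+1)/(A+1))) := by
        intro η
        by_cases hη : η ∈ Set.Icc (0:ℝ) (1-z)
        · rw [Set.indicator_of_mem hη]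
          simp only [gg1, if_pos (show (0:ℝ) ≤ z ∧ z ≤ 1 ∧ 0 ≤ η ∧ η ≤ 1-z from
            ⟨hz1, hz2, hη.1, hη.2⟩)]
          ring
        · rw [Set.indicator_of_notMem hη, zero_mul]
          rw [Set.mem_Icc] at hη
          simp only [gg1]
          refine if_neg ?_
          intro hmem
          exact hη ⟨hmem.2.2.1, hmem.2.2.2⟩
      simp_rw [hptw]
      rw [integral_mul_const, integral_indicator measurableSet_Icc,
        integral_Icc_eq_integral_Ioc,
        ← intervalIntegral.integral_of_le (by linarith : (0:ℝ) ≤ 1 - z),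
        integral_pow]
      simp only [gg2, if_pos (show (0:ℝ) ≤ z ∧ z ≤ 1 from ⟨hz1, hz2⟩)]
      rw [zero_pow (show B+1 ≠ 0 by omega)]
      ring
    · have hptw : ∀ η : ℝ, gg1 k A B C (η, z) = 0 := by
        intro η
        simp only [gg1]
        refine if_neg ?_
        intro hmem
        exact hz ⟨hmem.1, hmem.2.1⟩
      simp_rw [hptw]
      rw [integral_zero]
      simp only [gg2]
      exact (if_neg hz).symm
  have hg1prod : Integrable (gg1 k A B C) ((volume : Measure ℝ).prod volume) := by
    rwa [← Measure.volume_eq_prod]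
  have step4 : ∫ q, gg1 k A B C q = ∫ z, gg2 k A B C z := by
    rw [Measure.volume_eq_prod, integral_prod_symm _ hg1prod]
    simp_rw [step3]
  have hg2eq : gg2 k A B C = (Set.Icc (0:ℝ) 1).indicator (fun z =>
      z^C * (1-z)^(2*k+6)/(1-z)^(8+A+B+C) * ((1-z)^(A+1)/(A+1)) * ((1-z)^(B+1)/(B+1))) := by
    funext z
    rw [Set.indicator_apply]
    simp [gg2, Set.mem_Icc]
  have step5 : ∫ z, gg2 k A B C z = ∫ z in (0:ℝ)..1,
      z^C * (1-z)^(2*k+6)/(1-z)^(8+A+B+C) * ((1-z)^(A+1)/(A+1)) * ((1-z)^(B+1)/(B+1)) := by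
    rw [hg2eq, integral_indicator measurableSet_Icc, integral_Icc_eq_integral_Ioc,
      ← intervalIntegral.integral_of_le zero_le_one]
  rw [step2, step4, step5, integral_pow, integral_pow, one_pow,
    zero_pow (show A+1 ≠ 0 by omega), zero_pow (show B+1 ≠ 0 by omega), sub_zero,
    ← intervalIntegral.integral_const_mul]
  apply intervalIntegral.integral_congr
  intro z hz
  rw [Set.uIcc_of_le zero_le_one, Set.mem_Icc] at hz
  beta_reduce
  by_cases hz1 : z = 1
  · subst hz1
    rw [show (1:ℝ)-1 = 0 by norm_num, zero_pow (show 2*k+6 ≠ 0 by omega),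
      zero_pow (show A+1 ≠ 0 by omega), zero_pow (show B+1 ≠ 0 by omega),
      zero_pow (show 2 ≠ 0 by omega)]
    norm_num
  · have ht : (1:ℝ) - z ≠ 0 := sub_ne_zero.mpr (fun h => hz1 h.symm)
    have hA1 : (A:ℝ)+1 ≠ 0 := by positivity
    have hB1 : (B:ℝ)+1 ≠ 0 := by positivity
    rw [show 2*k+6 = C + (2*k-2-C) + 8 by omega]
    field_simp
    ring

/-- The "hat" transform of a function on the infinite pyramid. -/
private def Th (w : (ℝ×ℝ×ℝ) → ℝ) (p : ℝ×ℝ×ℝ) : ℝ :=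
  (1 - p.2.2) ^ (-4 : ℤ) * w (phiInv p)

private lemma prod_formula (k a b c a' b' c' : ℕ) (p : ℝ×ℝ×ℝ) :
    Th (fun q => q.1^a * q.2.1^b * q.2.2^c / (1+q.2.2)^(k+3)) p *
    Th (fun q => q.1^a' * q.2.1^b' * q.2.2^c' / (1+q.2.2)^(k+3)) p
    = p.1^(a+a') * p.2.1^(b+b') * p.2.2^(c+c') * (1-p.2.2)^(2*k+6)
      / (1-p.2.2)^(8+(a+a')+(b+b')+(c+c')) := by
  obtain ⟨x, y, z⟩ := p
  simp only [Th, phiInv]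
  by_cases hz : z = 1
  · subst hz
    norm_num
  · have ht : (1:ℝ) - z ≠ 0 := sub_ne_zero.mpr (fun h => hz h.symm)
    rw [show (1:ℝ) + z/(1-z) = 1/(1-z) by field_simp; ring]
    rw [show ((1:ℝ)-z)^(-4:ℤ) = ((1-z)^4)⁻¹ by
      rw [zpow_neg]; norm_cast]
    rw [show 2*k+6 = (k+3)+(k+3) by ring, show 8+(a+a')+(b+b')+(c+c')
      = (4+a+b+c) + (4+a'+b'+c') by ring]
    simp only [div_pow, one_div, inv_pow, pow_add]
    field_simp

private lemma point_formula (k A B C : ℕ) (hC : C + 2 ≤ 2*k) (x y z : ℝ) (hz : z < 1) :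
    (x*(1-z))^A * (y*(1-z))^B * z^C * (1-z)^(2*k+6) / (1-z)^(8+A+B+C)
      = x^A * (y^B * (z^C * (1-z)^(2*k-2-C))) := by
  have ht : (1:ℝ) - z ≠ 0 := by intro h; linarith [h]
  rw [mul_pow, mul_pow, div_eq_iff (pow_ne_zero _ ht),
    show 2*k+6 = C + (2*k-2-C) + 8 by omega]
  ring

private lemma quadS_add {N M : ℕ} (xi lam : Fin N → ℝ) (ze mu : Fin M → ℝ)
    (f g : ℝ × ℝ × ℝ → ℝ) :
    quadS xi lam ze mu (fun p => f p + g p) = quadS xi lam ze mu f + quadS xi lam ze mu g := by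
  simp [quadS, mul_add, Finset.sum_add_distrib]

private lemma quadS_mul {N M : ℕ} (xi lam : Fin N → ℝ) (ze mu : Fin M → ℝ)
    (r : ℝ) (f : ℝ × ℝ × ℝ → ℝ) :
    quadS xi lam ze mu (fun p => r * f p) = r * quadS xi lam ze mu f := by
  unfold quadS
  rw [Finset.mul_sum]
  refine Finset.sum_congr rfl fun i _ => ?_
  rw [Finset.mul_sum]
  refine Finset.sum_congr rfl fun j _ => ?_
  rw [Finset.mul_sum]
  refine Finset.sum_congr rfl fun l _ => ?_
  ring
/-- for ũ, ṽ in the L²-underlying space U^{(3)}_k = Q_{k+3}^{k−1,k−1,k−1},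
with û = (1−ζ)⁻⁴ · (ũ ∘ φ⁻¹) and v̂ likewise, the product û·v̂ is integrable on K̂
and the conical product rule of order k ≥ 1 is exact for it. -/
theorem stmt_4 (k : ℕ) (hk : 1 ≤ k) {N M : ℕ} (xi lam : Fin N → ℝ) (ze mu : Fin M → ℝ)
    (hze : ∀ l, ze l ∈ Set.Ico (0 : ℝ) 1)
    (hxi : ∀ g : Polynomial ℝ, g.natDegree ≤ 2 * k + 1 →
      ∑ i, lam i * g.eval (xi i) = ∫ x in (0:ℝ)..1, g.eval x)
    (hmu : ∀ h : Polynomial ℝ, h.natDegree ≤ 2 * k + 1 →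
      ∑ l, mu l * h.eval (ze l) = ∫ z in (0:ℝ)..1, (1 - z) ^ 2 * h.eval z)
    (ut vt : (ℝ × ℝ × ℝ) → ℝ)
    (hut : ut ∈ Qspace (k + 3) ((k : ℤ) - 1) ((k : ℤ) - 1) ((k : ℤ) - 1))
    (hvt : vt ∈ Qspace (k + 3) ((k : ℤ) - 1) ((k : ℤ) - 1) ((k : ℤ) - 1))
    (uh vh : (ℝ × ℝ × ℝ) → ℝ)
    (huh : ∀ p : ℝ × ℝ × ℝ, p.2.2 ≠ 1 → uh p = (1 - p.2.2) ^ (-4 : ℤ) * ut (phiInv p))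
    (hvh : ∀ p : ℝ × ℝ × ℝ, p.2.2 ≠ 1 → vh p = (1 - p.2.2) ^ (-4 : ℤ) * vt (phiInv p)) :
    IntegrableOn (fun p => uh p * vh p) Khat volume ∧
    quadS xi lam ze mu (fun p => uh p * vh p) = ∫ p in Khat, uh p * vh p := by
  have hut' : ut ∈ Submodule.span ℝ {f : (ℝ×ℝ×ℝ) → ℝ | ∃ a b c : ℕ,
      (a : ℤ) ≤ (k:ℤ)-1 ∧ (b : ℤ) ≤ (k:ℤ)-1 ∧ (c : ℤ) ≤ (k:ℤ)-1 ∧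
      f = fun p => p.1 ^ a * p.2.1 ^ b * p.2.2 ^ c / (1 + p.2.2) ^ (k+3)} := hut
  have hvt' : vt ∈ Submodule.span ℝ {f : (ℝ×ℝ×ℝ) → ℝ | ∃ a b c : ℕ,
      (a : ℤ) ≤ (k:ℤ)-1 ∧ (b : ℤ) ≤ (k:ℤ)-1 ∧ (c : ℤ) ≤ (k:ℤ)-1 ∧
      f = fun p => p.1 ^ a * p.2.1 ^ b * p.2.2 ^ c / (1 + p.2.2) ^ (k+3)} := hvt
  have main : IntegrableOn (fun p => Th ut p * Th vt p) Khat volume ∧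
      quadS xi lam ze mu (fun p => Th ut p * Th vt p) = ∫ p in Khat, Th ut p * Th vt p := by
    clear huh hvh hut hvt uh vh
    induction hut', hvt' using Submodule.span_induction₂ with
    | mem_mem u v hu hv =>
      obtain ⟨a, b, c, ha, hb, hc, rfl⟩ := hu
      obtain ⟨a', b', c', ha', hb', hc', rfl⟩ := hv
      have hC : (c+c') + 2 ≤ 2*k := by omega
      have he : (fun p => Th (fun q => q.1^a * q.2.1^b * q.2.2^c / (1+q.2.2)^(k+3)) p *
          Th (fun q => q.1^a' * q.2.1^b' * q.2.2^c' / (1+q.2.2)^(k+3)) p)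
          = fun p : ℝ×ℝ×ℝ => p.1^(a+a') * p.2.1^(b+b') * p.2.2^(c+c') * (1-p.2.2)^(2*k+6)
            / (1-p.2.2)^(8+(a+a')+(b+b')+(c+c')) :=
        funext (prod_formula k a b c a' b' c')
      rw [he]
      refine ⟨core_int k (a+a') (b+b') (c+c') hC, ?_⟩
      have hterm : ∀ (i : Fin N) (j : Fin N) (l : Fin M),
          lam i * lam j * mu l *
            ((xi i * (1 - ze l))^(a+a') * (xi j * (1 - ze l))^(b+b') * (ze l)^(c+c')
              * (1-ze l)^(2*k+6) / (1-ze l)^(8+(a+a')+(b+b')+(c+c')))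
          = (lam i * xi i^(a+a')) * ((lam j * xi j^(b+b'))
              * (mu l * (ze l^(c+c') * (1-ze l)^(2*k-2-(c+c'))))) := by
        intro i j l
        rw [point_formula k (a+a') (b+b') (c+c') hC (xi i) (xi j) (ze l) (hze l).2]
        ring
      have hq : quadS xi lam ze mu (fun p : ℝ×ℝ×ℝ =>
          p.1^(a+a') * p.2.1^(b+b') * p.2.2^(c+c') * (1-p.2.2)^(2*k+6)
            / (1-p.2.2)^(8+(a+a')+(b+b')+(c+c')))
          = (∑ i, lam i * xi i^(a+a')) * ((∑ j, lam j * xi j^(b+b'))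
              * (∑ l, mu l * (ze l^(c+c') * (1-ze l)^(2*k-2-(c+c'))))) := by
        unfold quadS
        simp_rw [hterm]
        simp_rw [← Finset.mul_sum, ← Finset.sum_mul]
      rw [hq, core_eq k (a+a') (b+b') (c+c') hC]
      have hXA : ∑ i, lam i * xi i^(a+a') = ∫ x in (0:ℝ)..1, x^(a+a') := by
        have h := hxi (Polynomial.X^(a+a')) (by
          rw [Polynomial.natDegree_X_pow]; omega)
        simpa using h
      have hXB : ∑ j, lam j * xi j^(b+b') = ∫ x in (0:ℝ)..1, x^(b+b') := by
        have h := hxi (Polynomial.X^(b+b')) (by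
          rw [Polynomial.natDegree_X_pow]; omega)
        simpa using h
      have hMU : ∑ l, mu l * (ze l^(c+c') * (1-ze l)^(2*k-2-(c+c')))
          = ∫ z in (0:ℝ)..1, (1-z)^2 * (z^(c+c') * (1-z)^(2*k-2-(c+c'))) := by
        have hdeg : (Polynomial.X^(c+c') *
            ((1:Polynomial ℝ) - Polynomial.X)^(2*k-2-(c+c'))).natDegree ≤ 2*k+1 := by
          refine le_trans Polynomial.natDegree_mul_le ?_
          have h1 : (Polynomial.X^(c+c') : Polynomial ℝ).natDegree = c+c' :=
            Polynomial.natDegree_X_pow _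
          have h2 : (((1:Polynomial ℝ) - Polynomial.X)^(2*k-2-(c+c'))).natDegree
              ≤ (2*k-2-(c+c')) * 1 := by
            refine le_trans Polynomial.natDegree_pow_le ?_
            have h3 : ((1:Polynomial ℝ) - Polynomial.X).natDegree ≤ 1 :=
              le_trans (Polynomial.natDegree_sub_le _ _) (by simp)
            exact Nat.mul_le_mul_left _ h3
          omega
        have h := hmu _ hdeg
        simpa using h
      rw [hXA, hXB, hMU]
      ring
    | zero_left v hv =>
      have h0 : (fun p : ℝ×ℝ×ℝ => Th 0 p * Th v p) = fun _ => (0:ℝ) := by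
        funext p; simp [Th]
      rw [h0]
      refine ⟨integrableOn_zero, ?_⟩
      simp [quadS]
    | zero_right u hu =>
      have h0 : (fun p : ℝ×ℝ×ℝ => Th u p * Th 0 p) = fun _ => (0:ℝ) := by
        funext p; simp [Th]
      rw [h0]
      refine ⟨integrableOn_zero, ?_⟩
      simp [quadS]
    | add_left x y z hx hy hz h1 h2 =>
      obtain ⟨hI1, hQ1⟩ := h1
      obtain ⟨hI2, hQ2⟩ := h2
      have he : (fun p : ℝ×ℝ×ℝ => Th (x + y) p * Th z p)
          = fun p => (Th x p * Th z p) + (Th y p * Th z p) := by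
        funext p; simp [Th]; ring
      rw [he]
      refine ⟨hI1.add hI2, ?_⟩
      rw [quadS_add xi lam ze mu (fun p => Th x p * Th z p) (fun p => Th y p * Th z p),
        integral_add hI1 hI2, hQ1, hQ2]
    | add_right x y z hx hy hz h1 h2 =>
      obtain ⟨hI1, hQ1⟩ := h1
      obtain ⟨hI2, hQ2⟩ := h2
      have he : (fun p : ℝ×ℝ×ℝ => Th x p * Th (y + z) p)
          = fun p => (Th x p * Th y p) + (Th x p * Th z p) := by
        funext p; simp [Th]; ring
      rw [he]
      refine ⟨hI1.add hI2, ?_⟩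
      rw [quadS_add xi lam ze mu (fun p => Th x p * Th y p) (fun p => Th x p * Th z p),
        integral_add hI1 hI2, hQ1, hQ2]
    | smul_left r x z hx hz h1 =>
      obtain ⟨hI, hQ⟩ := h1
      have he : (fun p : ℝ×ℝ×ℝ => Th (r • x) p * Th z p)
          = fun p => r * (Th x p * Th z p) := by
        funext p; simp [Th]; ring
      rw [he]
      refine ⟨hI.const_mul r, ?_⟩
      rw [quadS_mul xi lam ze mu r (fun p => Th x p * Th z p), integral_const_mul, hQ]
    | smul_right r x z hx hz h1 =>
      obtain ⟨hI, hQ⟩ := h1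
      have he : (fun p : ℝ×ℝ×ℝ => Th x p * Th (r • z) p)
          = fun p => r * (Th x p * Th z p) := by
        funext p; simp [Th]; ring
      rw [he]
      refine ⟨hI.const_mul r, ?_⟩
      rw [quadS_mul xi lam ze mu r (fun p => Th x p * Th z p), integral_const_mul, hQ]
  obtain ⟨hI, hQ⟩ := main
  have hae : ∀ᵐ p ∂(volume.restrict Khat), p.2.2 ≠ (1:ℝ) := by
    rw [ae_iff]
    have hset : {p : ℝ×ℝ×ℝ | ¬ p.2.2 ≠ 1} = {p : ℝ×ℝ×ℝ | p.2.2 = 1} := by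
      ext p; simp
    rw [hset, Measure.restrict_apply' Khat_mble]
    refine measure_mono_null ?_ sing_null
    rintro ⟨x, y, z⟩ ⟨hz1, h1, h2, h3, h4, h5, h6⟩
    simp only [Set.mem_setOf_eq] at hz1
    have hx : x = 0 := le_antisymm (by rw [hz1] at h4; simpa using h4) h3
    have hy : y = 0 := le_antisymm (by rw [hz1] at h6; simpa using h6) h5
    simp [hx, hy, hz1]
  have haeq : (fun p : ℝ×ℝ×ℝ => Th ut p * Th vt p)
      =ᵐ[volume.restrict Khat] (fun p => uh p * vh p) := by
    filter_upwards [hae] with p hp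
    rw [huh p hp, hvh p hp]
    rfl
  refine ⟨hI.congr haeq, ?_⟩
  rw [← integral_congr_ae haeq, ← hQ]
  unfold quadS
  refine Finset.sum_congr rfl fun i _ => Finset.sum_congr rfl fun j _ =>
    Finset.sum_congr rfl fun l _ => ?_
  have hne : ((xi i * (1 - ze l), xi j * (1 - ze l), ze l) : ℝ×ℝ×ℝ).2.2 ≠ 1 :=
    ne_of_lt (hze l).2
  beta_reduce
  rw [huh _ hne, hvh _ hne]
  rfl
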